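/- For every nonempty closed subset S of the extended real line there exists a function f : [0,1] → ℝ such that the set of right-hand sequential secant derivatives of f at 0 is exactly S. -/

import Mathlib

open Filter Topology

noncomputable def secA (L : EReal) (n : ℕ) : ℝ :=
  if L = ⊤ then n else if L = ⊥ then -n else L.toReal

lemma secA_tendsto {e : ℕ → EReal} {L : EReal} (he : Tendsto e atTop (𝓝 L))
    {m : ℕ → ℕ} (hm : Tendsto m atTop atTop) :
    Tendsto (fun j => ((secA (e j) (m j) : ℝ) : EReal)) atTop (𝓝 L) := by
  induction L using EReal.rec with
  | top =>
    rw [EReal.tendsto_nhds_top_iff_real]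
    intro x
    filter_upwards [he.eventually (lt_mem_nhds (show (x : EReal) < ⊤ from EReal.coe_lt_top x)),
      hm.eventually (eventually_ge_atTop (⌈x⌉₊ + 1))] with j hj1 hj2
    unfold secA
    split_ifs with h1 h2
    · have : x < (m j : ℝ) := lt_of_le_of_lt (Nat.le_ceil x)
        (by exact_mod_cast Nat.lt_of_lt_of_le (Nat.lt_succ_self _) hj2)
      exact_mod_cast EReal.coe_lt_coe_iff.mpr this
    · rw [h2] at hj1; exact absurd hj1 (by simp)
    · rw [EReal.coe_toReal h1 h2]; exact hj1
  | bot =>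
    rw [EReal.tendsto_nhds_bot_iff_real]
    intro x
    filter_upwards [he.eventually (gt_mem_nhds (show (⊥ : EReal) < (x : EReal) from EReal.bot_lt_coe x)),
      hm.eventually (eventually_ge_atTop (⌈-x⌉₊ + 1))] with j hj1 hj2
    unfold secA
    split_ifs with h1 h2
    · rw [h1] at hj1; exact absurd hj1 (by simp)
    · have : -(m j : ℝ) < x := by
        have : -x < (m j : ℝ) := lt_of_le_of_lt (Nat.le_ceil (-x))
          (by exact_mod_cast Nat.lt_of_lt_of_le (Nat.lt_succ_self _) hj2)
        linarith
      exact_mod_cast EReal.coe_lt_coe_iff.mpr this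
    · rw [EReal.coe_toReal h1 h2]; exact hj1
  | coe c =>
    have hev : ∀ᶠ j in atTop, ((secA (e j) (m j) : ℝ) : EReal) = e j := by
      filter_upwards [he.eventually (lt_mem_nhds (show ((c - 1 : ℝ) : EReal) < (c : ℝ) by
          exact_mod_cast sub_one_lt c)),
        he.eventually (gt_mem_nhds (show ((c : ℝ) : EReal) < ((c + 1 : ℝ) : EReal) by
          exact_mod_cast lt_add_one c))] with j hj1 hj2
      have h1 : e j ≠ ⊤ := fun h => by rw [h] at hj2; exact absurd hj2 (by simp)
      have h2 : e j ≠ ⊥ := fun h => by rw [h] at hj1; exact absurd hj1 (by simp)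
      unfold secA
      rw [if_neg h1, if_neg h2, EReal.coe_toReal h1 h2]
    exact he.congr' (hev.mono fun j hj => hj.symm)

lemma secA_top (n : ℕ) : secA ⊤ n = (n : ℝ) := if_pos rfl

lemma secA_bot (n : ℕ) : secA ⊥ n = -(n : ℝ) := by
  unfold secA; rw [if_neg (by simp), if_pos rfl]

lemma secA_coe (L : EReal) (n : ℕ) (h1 : L ≠ ⊤) (h2 : L ≠ ⊥) :
    ((secA L n : ℝ) : EReal) = L := by
  unfold secA; rw [if_neg h1, if_neg h2, EReal.coe_toReal h1 h2]

/-- `L` is a right-hand sequential secant derivative at `0` of `f : [0,1] → ℝ`. -/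
def IsRightSecantDeriv (f : ℝ → ℝ) (L : EReal) : Prop :=
  ∃ h : ℕ → ℝ, (∀ n, 0 < h n) ∧ (∀ n, h n ≤ 1) ∧ Tendsto h atTop (𝓝 0) ∧
    Tendsto (fun n => (((f (h n) - f 0) / h n : ℝ) : EReal)) atTop (𝓝 L)

theorem any_closed_set_is_secant_deriv_set (S : Set EReal) (hne : S.Nonempty)
    (hcl : IsClosed S) :
    ∃ f : ℝ → ℝ, {L : EReal | IsRightSecantDeriv f L} = S := by
  have : Nonempty ↥S := hne.to_subtype
  obtain ⟨u, hu⟩ := TopologicalSpace.exists_dense_seq ↥S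
  have hdense : ∀ L ∈ S, ∃ k : ℕ → ℕ, Tendsto (fun j => ((u (k j) : EReal))) atTop (𝓝 L) := by
    intro L hL
    have : (⟨L, hL⟩ : ↥S) ∈ closure (Set.range u) := hu _
    rw [mem_closure_iff_seq_limit] at this
    obtain ⟨x, hx1, hx2⟩ := this
    choose k hk using hx1
    exact ⟨k, ((continuous_subtype_val.tendsto _).comp hx2).congr fun j => by simp [Function.comp, hk j]⟩
  set r : ℕ → ℝ := fun M => secA (u (Nat.unpair M).1 : EReal) M with hr
  refine ⟨fun x => if 0 < x then x * r ⌊1/x⌋₊ else 0, ?_⟩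
  have hf0 : (if (0:ℝ) < 0 then (0:ℝ) * r ⌊1/(0:ℝ)⌋₊ else 0) = 0 := if_neg (lt_irrefl 0)
  have hslope : ∀ x : ℝ, 0 < x →
      ((if 0 < x then x * r ⌊1/x⌋₊ else 0) - (if (0:ℝ) < 0 then (0:ℝ) * r ⌊1/(0:ℝ)⌋₊ else 0)) / x
        = r ⌊1/x⌋₊ := by
    intro x hx
    rw [hf0, if_pos hx, sub_zero, mul_div_cancel_left₀ _ (ne_of_gt hx)]
  ext L
  simp only [Set.mem_setOf_eq]
  constructor
  · rintro ⟨h, hpos, hle, h0, hlim⟩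
    set N : ℕ → ℕ := fun n => ⌊1 / h n⌋₊ with hN
    have hNtop : Tendsto N atTop atTop := by
      have h1 : Tendsto h atTop (𝓝[>] 0) :=
        tendsto_nhdsWithin_of_tendsto_nhds_of_eventually_within h h0
          (Eventually.of_forall fun n => hpos n)
      have h2 : Tendsto (fun n => 1 / h n) atTop atTop := by
        simpa [one_div, Function.comp_def] using tendsto_inv_nhdsGT_zero.comp h1
      exact tendsto_nat_floor_atTop.comp h2
    have hlim' : Tendsto (fun n => ((r (N n) : ℝ) : EReal)) atTop (𝓝 L) :=
      hlim.congr fun n => by rw [hslope (h n) (hpos n)]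
    set e : ℕ → EReal := fun n => (u (Nat.unpair (N n)).1 : EReal) with he
    have heS : ∀ n, e n ∈ S := fun n => (u _).2
    have tricho : ∀ᶠ n in atTop, (e n ≠ ⊤ ∧ e n ≠ ⊥) ∨ e n = ⊤ ∨ e n = ⊥ :=
      Eventually.of_forall fun n => by tauto
    have := tricho.frequently
    rw [frequently_or_distrib, frequently_or_distrib] at this
    rcases this with hfin | htop | hbot
    · have hfreq : ∃ᶠ n in atTop, ((r (N n) : ℝ) : EReal) ∈ S := by
        refine hfin.mono fun n hn => ?_
        have : ((r (N n) : ℝ) : EReal) = e n := secA_coe (e n) (N n) hn.1 hn.2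
        rw [this]; exact heS n
      have := mem_closure_of_frequently_of_tendsto hfreq hlim'
      rwa [hcl.closure_eq] at this
    · obtain ⟨φ, hφ, hφtop⟩ := extraction_of_frequently_atTop htop
      have h1 : Tendsto (fun m => ((r (N (φ m)) : ℝ) : EReal)) atTop (𝓝 L) :=
        hlim'.comp hφ.tendsto_atTop
      have h2 : Tendsto (fun m => ((r (N (φ m)) : ℝ) : EReal)) atTop (𝓝 ⊤) := by
        have hNφ : Tendsto (fun m => N (φ m)) atTop atTop := hNtop.comp hφ.tendsto_atTop
        rw [EReal.tendsto_nhds_top_iff_real]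
        intro x
        filter_upwards [hNφ.eventually (eventually_ge_atTop (⌈x⌉₊ + 1))] with m hm
        have hrr : r (N (φ m)) = (N (φ m) : ℝ) := by
          rw [show r (N (φ m)) = secA (e (φ m)) (N (φ m)) from rfl, hφtop m, secA_top]
        rw [hrr]
        have : x < (N (φ m) : ℝ) := lt_of_le_of_lt (Nat.le_ceil x)
          (by exact_mod_cast Nat.lt_of_lt_of_le (Nat.lt_succ_self _) hm)
        exact_mod_cast EReal.coe_lt_coe_iff.mpr this
      have : L = ⊤ := tendsto_nhds_unique h1 h2
      rw [this, ← hφtop 0]; exact heS _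
    · obtain ⟨φ, hφ, hφbot⟩ := extraction_of_frequently_atTop hbot
      have h1 : Tendsto (fun m => ((r (N (φ m)) : ℝ) : EReal)) atTop (𝓝 L) :=
        hlim'.comp hφ.tendsto_atTop
      have h2 : Tendsto (fun m => ((r (N (φ m)) : ℝ) : EReal)) atTop (𝓝 ⊥) := by
        have hNφ : Tendsto (fun m => N (φ m)) atTop atTop := hNtop.comp hφ.tendsto_atTop
        rw [EReal.tendsto_nhds_bot_iff_real]
        intro x
        filter_upwards [hNφ.eventually (eventually_ge_atTop (⌈-x⌉₊ + 1))] with m hm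
        have hrr : r (N (φ m)) = -(N (φ m) : ℝ) := by
          rw [show r (N (φ m)) = secA (e (φ m)) (N (φ m)) from rfl, hφbot m, secA_bot]
        rw [hrr]
        have : -(N (φ m) : ℝ) < x := by
          have : -x < (N (φ m) : ℝ) := lt_of_le_of_lt (Nat.le_ceil (-x))
            (by exact_mod_cast Nat.lt_of_lt_of_le (Nat.lt_succ_self _) hm)
          linarith
        exact_mod_cast EReal.coe_lt_coe_iff.mpr this
      have : L = ⊥ := tendsto_nhds_unique h1 h2
      rw [this, ← hφbot 0]; exact heS _
  · intro hL
    obtain ⟨k, hk⟩ := hdense L hL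
    set M : ℕ → ℕ := fun j => Nat.pair (k j) (j + 1) with hM
    have hM1 : ∀ j, 1 ≤ M j := fun j => le_trans (Nat.succ_le_succ (Nat.zero_le j)) (Nat.right_le_pair _ _)
    refine ⟨fun j => 1 / (M j : ℝ), fun j => ?_, fun j => ?_, ?_, ?_⟩
    · exact one_div_pos.mpr (by exact_mod_cast hM1 j)
    · rw [div_le_one (by exact_mod_cast hM1 j)]; exact_mod_cast hM1 j
    · apply squeeze_zero (fun j => le_of_lt (one_div_pos.mpr (by exact_mod_cast hM1 j)))
        (fun j => ?_) tendsto_one_div_add_atTop_nhds_zero_nat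
      apply one_div_le_one_div_of_le (by positivity)
      exact_mod_cast Nat.right_le_pair _ _
    · have hMpos : ∀ j, (0:ℝ) < 1 / (M j : ℝ) := fun j => one_div_pos.mpr (by exact_mod_cast hM1 j)
      have key : ∀ j, ((if 0 < (1 / (M j : ℝ)) then (1 / (M j : ℝ)) * r ⌊1/(1 / (M j : ℝ))⌋₊ else 0)
            - (if (0:ℝ) < 0 then (0:ℝ) * r ⌊1/(0:ℝ)⌋₊ else 0)) / (1 / (M j : ℝ))
          = secA (u (k j) : EReal) (M j) := by
        intro j
        rw [hslope _ (hMpos j), one_div_one_div, Nat.floor_natCast]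
        simp only [hr, hM, Nat.unpair_pair]
      have hMtop : Tendsto M atTop atTop :=
        tendsto_atTop_mono (fun j => le_trans (Nat.le_succ j) (Nat.right_le_pair _ _)) tendsto_id
      exact (secA_tendsto hk hMtop).congr fun j => by rw [← key j]
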